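/- If τ is a formal power series in variables t^0, t^1, t^2, ... with τ(0) = 0 satisfying the Virasoro constraints L_m τ = 0 for all m ≥ -1, then τ = 0. Consequently the solution of the Virasoro constraints is unique up to a constant factor. -/

import Mathlib

/-- The formal partial derivative `∂/∂t^p` acting on formal power series in the
variables `t^0, t^1, t^2, …`. -/
noncomputable def pd (p : ℕ) (f : MvPowerSeries ℕ ℂ) : MvPowerSeries ℕ ℂ :=
  fun n => ((n p : ℂ) + 1) * MvPowerSeries.coeff (n + Finsupp.single p 1) f

/-- Interpret a coefficient function as a formal power series. -/
noncomputable def ofFun (g : (ℕ →₀ ℕ) → ℂ) : MvPowerSeries ℕ ℂ := g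

/-- The Virasoro operators `L_m` (`m ≥ -1`) of two-dimensional gravity, acting on
formal power series in `t^0, t^1, …`.  For `m = -1` it is the string equation
operator, for `m ≥ 0` it is given by formula (2) of the paper, and for `m < -1`
we set it to `0`. -/
noncomputable def Vir (m : ℤ) (f : MvPowerSeries ℕ ℂ) : MvPowerSeries ℕ ℂ :=
  if m = -1 then
    ofFun (fun n => ∑ᶠ p : ℕ, MvPowerSeries.coeff n
        (MvPowerSeries.X (p + 1) * pd p f))
      + (MvPowerSeries.C (σ := ℕ) (R := ℂ)) (1/2) * MvPowerSeries.X 0 ^ 2 * f - pd 0 f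
  else if 0 ≤ m then
    (MvPowerSeries.C (σ := ℕ) (R := ℂ)) (1/2) *
      (∑ p ∈ Finset.range m.toNat,
        (MvPowerSeries.C (σ := ℕ) (R := ℂ))
          (((Nat.doubleFactorial (2*p+1) : ℂ) *
            (Nat.doubleFactorial (2*(m.toNat - 1 - p)+1) : ℂ)) / 2 ^ (m.toNat + 1)) *
          pd p (pd (m.toNat - 1 - p) f))
    + ofFun (fun n => ∑ᶠ p : ℕ, MvPowerSeries.coeff n
        ((MvPowerSeries.C (σ := ℕ) (R := ℂ)) ((Nat.doubleFactorial (2*p+2*m.toNat+1) : ℂ) /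
            (2 ^ (m.toNat + 1) * (Nat.doubleFactorial (2*p - 1) : ℂ))) *
          ((MvPowerSeries.X p : MvPowerSeries ℕ ℂ) - if p = 1 then 1 else 0) *
          pd (p + m.toNat) f))
    + (if m = 0 then (MvPowerSeries.C (σ := ℕ) (R := ℂ)) (1/16) * f else 0)
  else 0

namespace VirAux
open MvPowerSeries Finsupp

noncomputable def ee (p : ℕ) : ℕ →₀ ℕ := Finsupp.single p 1

lemma coeff_ofFun (g : (ℕ →₀ ℕ) → ℂ) (n : ℕ →₀ ℕ) : coeff n (ofFun g) = g n := rfl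

lemma coeff_pd (p : ℕ) (f : MvPowerSeries ℕ ℂ) (n : ℕ →₀ ℕ) :
    coeff n (pd p f) = ((n p : ℂ) + 1) * coeff (n + ee p) f := rfl

lemma coeff_X_mul (j : ℕ) (f : MvPowerSeries ℕ ℂ) (n : ℕ →₀ ℕ) :
    coeff n (X j * f) = if ee j ≤ n then coeff (n - ee j) f else 0 := by
  rw [X_def, coeff_monomial_mul]; unfold ee; split_ifs <;> simp

/-- the weight of a monomial, `t^p` having weight `2p+1`. -/
def wt (n : ℕ →₀ ℕ) : ℕ := n.sum fun p k => k * (2*p+1)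

lemma wt_add (a b : ℕ →₀ ℕ) : wt (a + b) = wt a + wt b :=
  Finsupp.sum_add_index' (by simp) (by intros; ring)

lemma wt_single (p k : ℕ) : wt (single p k) = k * (2*p+1) :=
  Finsupp.sum_single_index (by simp)

lemma wt_ee (p : ℕ) : wt (ee p) = 2*p+1 := by rw [ee, wt_single]; ring

lemma wt_tsub {d n : ℕ →₀ ℕ} (h : d ≤ n) : wt (n - d) + wt d = wt n := by
  conv_rhs => rw [← tsub_add_cancel_of_le h]
  rw [wt_add]

lemma ee_le_iff {p : ℕ} {n : ℕ →₀ ℕ} : ee p ≤ n ↔ 1 ≤ n p := Finsupp.single_le_iff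

lemma string_coeff {τ : MvPowerSeries ℕ ℂ} (h : Vir (-1) τ = 0) (m : ℕ →₀ ℕ) :
    (∑ᶠ p : ℕ, coeff m (X (p+1) * pd p τ))
      + (1/2) * coeff m (X 0 ^ 2 * τ) - coeff m (pd 0 τ) = 0 := by
  have h2 := congrArg (coeff m) h
  rw [Vir, if_pos rfl] at h2
  rw [map_sub, map_add, mul_assoc, coeff_C_mul, coeff_ofFun, map_zero] at h2
  exact h2

lemma virq_coeff {τ : MvPowerSeries ℕ ℂ} (q : ℕ) (h : Vir (q : ℤ) τ = 0) (m : ℕ →₀ ℕ) :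
    (1/2) * (∑ p ∈ Finset.range q,
        (((Nat.doubleFactorial (2*p+1) : ℂ) *
            (Nat.doubleFactorial (2*(q - 1 - p)+1) : ℂ)) / 2 ^ (q + 1)) *
          coeff m (pd p (pd (q - 1 - p) τ)))
    + (∑ᶠ p : ℕ, coeff m
        ((MvPowerSeries.C (σ := ℕ) (R := ℂ)) ((Nat.doubleFactorial (2*p+2*q+1) : ℂ) /
            (2 ^ (q + 1) * (Nat.doubleFactorial (2*p - 1) : ℂ))) *
          ((MvPowerSeries.X p : MvPowerSeries ℕ ℂ) - if p = 1 then 1 else 0) *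
          pd (p + q) τ))
    + (if q = 0 then (1/16) * coeff m τ else 0) = 0 := by
  have h2 := congrArg (coeff m) h
  rw [Vir, if_neg (by omega : ¬((q:ℤ) = -1)), if_pos (by omega : (0:ℤ) ≤ (q:ℤ))] at h2
  simp only [Int.toNat_natCast] at h2
  rw [map_add, map_add, coeff_C_mul, map_sum, coeff_ofFun, map_zero] at h2
  simp only [coeff_C_mul] at h2
  rw [apply_ite (coeff m), coeff_C_mul, map_zero] at h2
  simp only [Nat.cast_eq_zero] at h2
  exact h2

lemma vanish {τ : MvPowerSeries ℕ ℂ} (h0 : (MvPowerSeries.constantCoeff (σ := ℕ) (R := ℂ)) τ = 0)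
    (h : ∀ m : ℤ, -1 ≤ m → Vir m τ = 0) : τ = 0 := by
  have key : ∀ N : ℕ, ∀ n : ℕ →₀ ℕ, wt n ≤ N → coeff n τ = 0 := by
    intro N
    induction N using Nat.strong_induction_on with
    | _ N IH =>
      intro n hn
      by_cases hn0 : n = 0
      · subst hn0; rw [coeff_zero_eq_constantCoeff]; exact h0
      · obtain ⟨p, hp⟩ : ∃ p, 1 ≤ n p := by
          by_contra hc
          push_neg at hc
          exact hn0 (Finsupp.ext fun a => by simpa using Nat.lt_one_iff.mp (hc a))
        set m : ℕ →₀ ℕ := n - ee p with hmdef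
        have hle : ee p ≤ n := ee_le_iff.mpr hp
        have hmn : m + ee p = n := tsub_add_cancel_of_le hle
        have hwt : wt m + (2*p+1) = wt n := by
          have := wt_tsub hle; rwa [wt_ee] at this
        have IH' : ∀ k : ℕ →₀ ℕ, wt k < wt n → coeff k τ = 0 := by
          intro k hk
          exact IH (wt k) (lt_of_lt_of_le hk hn) k le_rfl
        -- helper : coefficient of X j * pd i τ at m vanishes when the index has small weight
        have hXpd : ∀ j i : ℕ, wt m + (2*i+1) < wt n + (2*j+1) →
            coeff m (X j * pd i τ) = 0 := by
          intro j i hw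
          rw [coeff_X_mul]
          split_ifs with hj
          · rw [coeff_pd]
            apply mul_eq_zero_of_right
            apply IH'
            have h1 : wt (m - ee j) + (2*j+1) = wt m := by
              have := wt_tsub hj; rwa [wt_ee] at this
            rw [wt_add, wt_ee]
            omega
          · rfl
        cases p with
        | zero =>
          have hs := string_coeff (h (-1) le_rfl) m
          have hA : ∀ p' : ℕ, coeff m (X (p'+1) * pd p' τ) = 0 := by
            intro p'
            apply hXpd
            omega
          have hB : coeff m (X 0 ^ 2 * τ) = 0 := by
            rw [X_pow_eq, coeff_monomial_mul]
            split_ifs with hd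
            · rw [one_mul]
              apply IH'
              have h1 := wt_tsub hd
              rw [wt_single] at h1
              omega
            · rfl
          rw [coeff_pd, hmn] at hs
          simp only [hA, finsum_zero, hB] at hs
          have hnz : ((m 0 : ℂ) + 1) ≠ 0 := Nat.cast_add_one_ne_zero _
          have h5 : ((m 0 : ℂ) + 1) * coeff n τ = 0 := by linear_combination -hs
          exact (mul_eq_zero.mp h5).resolve_left hnz
        | succ q =>
          have hs := virq_coeff q (h q (by omega)) m
          -- quadratic terms vanish
          have hquad : ∀ i ∈ Finset.range q,
              (((Nat.doubleFactorial (2*i+1) : ℂ) *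
                (Nat.doubleFactorial (2*(q - 1 - i)+1) : ℂ)) / 2 ^ (q + 1)) *
                coeff m (pd i (pd (q - 1 - i) τ)) = 0 := by
            intro i hi
            rw [Finset.mem_range] at hi
            apply mul_eq_zero_of_right
            rw [coeff_pd, coeff_pd]
            apply mul_eq_zero_of_right
            apply mul_eq_zero_of_right
            apply IH'
            rw [wt_add, wt_add, wt_ee, wt_ee]
            omega
          rw [Finset.sum_congr rfl hquad, Finset.sum_const_zero, mul_zero, zero_add] at hs
          -- the finsum has a single surviving term at p' = 1
          rw [finsum_eq_single _ 1 (by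
            intro p' hp'
            rw [if_neg hp', sub_zero, mul_assoc, coeff_C_mul]
            apply mul_eq_zero_of_right
            apply hXpd
            omega)] at hs
          rw [if_pos rfl] at hs
          have hexp : (MvPowerSeries.C (σ := ℕ) (R := ℂ)) ((Nat.doubleFactorial (2*1+2*q+1) : ℂ) /
                (2 ^ (q + 1) * (Nat.doubleFactorial (2*1 - 1) : ℂ))) *
              ((MvPowerSeries.X 1 : MvPowerSeries ℕ ℂ) - 1) * pd (1 + q) τ =
              (MvPowerSeries.C (σ := ℕ) (R := ℂ)) ((Nat.doubleFactorial (2*1+2*q+1) : ℂ) /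
                (2 ^ (q + 1) * (Nat.doubleFactorial (2*1 - 1) : ℂ))) *
              (MvPowerSeries.X 1 * pd (1 + q) τ) -
              (MvPowerSeries.C (σ := ℕ) (R := ℂ)) ((Nat.doubleFactorial (2*1+2*q+1) : ℂ) /
                (2 ^ (q + 1) * (Nat.doubleFactorial (2*1 - 1) : ℂ))) * pd (1 + q) τ := by
            ring
          rw [hexp, map_sub, coeff_C_mul, coeff_C_mul] at hs
          rw [hXpd 1 (1+q) (by omega), mul_zero, zero_sub] at hs
          rw [coeff_pd] at hs
          have hone : m + ee (1 + q) = n := by rw [Nat.add_comm 1 q]; exact hmn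
          rw [hone] at hs
          -- the dilaton-type coefficient is nonzero
          have hd1 : ((Nat.doubleFactorial (2*1+2*q+1) : ℂ) /
              (2 ^ (q + 1) * (Nat.doubleFactorial (2*1 - 1) : ℂ))) ≠ 0 := by
            apply div_ne_zero
            · exact_mod_cast (Nat.doubleFactorial_pos _).ne'
            · apply mul_ne_zero (pow_ne_zero _ two_ne_zero)
              exact_mod_cast (Nat.doubleFactorial_pos _).ne'
          have hmq : ((m (1+q) : ℂ) + 1) ≠ 0 := Nat.cast_add_one_ne_zero _
          -- hs : -(d * ((m (1+q))+1) * coeff n τ)) + (if q=0 then (1/16)*coeff m τ else 0) = 0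
          have hmz : coeff m τ = 0 := IH' m (by omega)
          rw [hmz] at hs
          simp only [mul_zero, ite_self] at hs
          have h5 : ((Nat.doubleFactorial (2*1+2*q+1) : ℂ) /
              (2 ^ (q + 1) * (Nat.doubleFactorial (2*1 - 1) : ℂ))) *
              (((m (1+q) : ℂ) + 1) * coeff n τ) = 0 := by linear_combination -hs
          rcases mul_eq_zero.mp h5 with h6 | h6
          · exact absurd h6 hd1
          · exact (mul_eq_zero.mp h6).resolve_left hmq
  apply MvPowerSeries.ext
  intro n
  rw [key (wt n) n le_rfl, map_zero]

lemma pd_sub_smul (p : ℕ) (c : ℂ) (f g : MvPowerSeries ℕ ℂ) :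
    pd p (f - c • g) = pd p f - c • pd p g := by
  apply MvPowerSeries.ext
  intro n
  show ((n p : ℂ) + 1) * coeff (n + Finsupp.single p 1) (f - c • g) = _
  rw [map_sub, map_smul, map_sub, map_smul, smul_eq_mul, smul_eq_mul]
  show _ = ((n p : ℂ) + 1) * coeff (n + Finsupp.single p 1) f -
      c * (((n p : ℂ) + 1) * coeff (n + Finsupp.single p 1) g)
  ring

lemma supp_string (f : MvPowerSeries ℕ ℂ) (m : ℕ →₀ ℕ) :
    (Function.support fun p => coeff m (X (p+1) * pd p f)).Finite := by
  apply Set.Finite.subset (Finset.finite_toSet (m.support.image Nat.pred))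
  intro p hp
  rw [Function.mem_support] at hp
  have hle : ee (p+1) ≤ m := by
    by_contra hc
    exact hp (by rw [coeff_X_mul, if_neg hc])
  have hmem : p + 1 ∈ m.support := by
    rw [Finsupp.mem_support_iff]
    have := ee_le_iff.mp hle
    omega
  simp only [Finset.coe_image, Set.mem_image, Finset.mem_coe]
  exact ⟨p + 1, hmem, rfl⟩

lemma supp_vq (q : ℕ) (f : MvPowerSeries ℕ ℂ) (m : ℕ →₀ ℕ) :
    (Function.support fun p => coeff m
        ((MvPowerSeries.C (σ := ℕ) (R := ℂ)) ((Nat.doubleFactorial (2*p+2*q+1) : ℂ) /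
            (2 ^ (q + 1) * (Nat.doubleFactorial (2*p - 1) : ℂ))) *
          ((MvPowerSeries.X p : MvPowerSeries ℕ ℂ) - if p = 1 then 1 else 0) *
          pd (p + q) f)).Finite := by
  apply Set.Finite.subset (Set.Finite.insert 1 (Finset.finite_toSet m.support))
  intro p hp
  rw [Function.mem_support] at hp
  by_cases hp1 : p = 1
  · exact Set.mem_insert_iff.mpr (Or.inl hp1)
  · refine Set.mem_insert_iff.mpr (Or.inr ?_)
    rw [if_neg hp1, sub_zero, mul_assoc, coeff_C_mul] at hp
    have hle : ee p ≤ m := by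
      by_contra hc
      exact hp (by rw [coeff_X_mul, if_neg hc, mul_zero])
    rw [Finset.mem_coe, Finsupp.mem_support_iff]
    have := ee_le_iff.mp hle
    omega


lemma hS_lemma (Q : ℕ) (c : ℂ) (f g : MvPowerSeries ℕ ℂ) :
    (∑ p ∈ Finset.range Q,
        (MvPowerSeries.C (σ := ℕ) (R := ℂ))
          (((Nat.doubleFactorial (2*p+1) : ℂ) *
            (Nat.doubleFactorial (2*(Q - 1 - p)+1) : ℂ)) / 2 ^ (Q + 1)) *
          pd p (pd (Q - 1 - p) (f - c • g))) =
        (∑ p ∈ Finset.range Q,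
        (MvPowerSeries.C (σ := ℕ) (R := ℂ))
          (((Nat.doubleFactorial (2*p+1) : ℂ) *
            (Nat.doubleFactorial (2*(Q - 1 - p)+1) : ℂ)) / 2 ^ (Q + 1)) *
          pd p (pd (Q - 1 - p) f)) -
        c • (∑ p ∈ Finset.range Q,
        (MvPowerSeries.C (σ := ℕ) (R := ℂ))
          (((Nat.doubleFactorial (2*p+1) : ℂ) *
            (Nat.doubleFactorial (2*(Q - 1 - p)+1) : ℂ)) / 2 ^ (Q + 1)) *
          pd p (pd (Q - 1 - p) g)) := by
  rw [Finset.smul_sum, ← Finset.sum_sub_distrib]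
  apply Finset.sum_congr rfl
  intro i _
  rw [pd_sub_smul, pd_sub_smul, mul_sub, mul_smul_comm]

lemma hF_lemma (Q : ℕ) (c : ℂ) (f g : MvPowerSeries ℕ ℂ) :
    ofFun (fun n => ∑ᶠ p : ℕ, coeff n
        ((MvPowerSeries.C (σ := ℕ) (R := ℂ)) ((Nat.doubleFactorial (2*p+2*Q+1) : ℂ) /
            (2 ^ (Q + 1) * (Nat.doubleFactorial (2*p - 1) : ℂ))) *
          ((MvPowerSeries.X p : MvPowerSeries ℕ ℂ) - if p = 1 then 1 else 0) *
          pd (p + Q) (f - c • g))) =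
        ofFun (fun n => ∑ᶠ p : ℕ, coeff n
        ((MvPowerSeries.C (σ := ℕ) (R := ℂ)) ((Nat.doubleFactorial (2*p+2*Q+1) : ℂ) /
            (2 ^ (Q + 1) * (Nat.doubleFactorial (2*p - 1) : ℂ))) *
          ((MvPowerSeries.X p : MvPowerSeries ℕ ℂ) - if p = 1 then 1 else 0) *
          pd (p + Q) f)) -
        c • ofFun (fun n => ∑ᶠ p : ℕ, coeff n
        ((MvPowerSeries.C (σ := ℕ) (R := ℂ)) ((Nat.doubleFactorial (2*p+2*Q+1) : ℂ) /
            (2 ^ (Q + 1) * (Nat.doubleFactorial (2*p - 1) : ℂ))) *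
          ((MvPowerSeries.X p : MvPowerSeries ℕ ℂ) - if p = 1 then 1 else 0) *
          pd (p + Q) g)) := by
  apply MvPowerSeries.ext
  intro n
  rw [map_sub, map_smul, coeff_ofFun, coeff_ofFun, coeff_ofFun, smul_eq_mul]
  have hpt : ∀ p : ℕ, coeff n
      ((MvPowerSeries.C (σ := ℕ) (R := ℂ)) ((Nat.doubleFactorial (2*p+2*Q+1) : ℂ) /
        (2 ^ (Q + 1) * (Nat.doubleFactorial (2*p - 1) : ℂ))) *
      ((MvPowerSeries.X p : MvPowerSeries ℕ ℂ) - if p = 1 then 1 else 0) *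
      pd (p + Q) (f - c • g)) =
      coeff n ((MvPowerSeries.C (σ := ℕ) (R := ℂ)) ((Nat.doubleFactorial (2*p+2*Q+1) : ℂ) /
        (2 ^ (Q + 1) * (Nat.doubleFactorial (2*p - 1) : ℂ))) *
      ((MvPowerSeries.X p : MvPowerSeries ℕ ℂ) - if p = 1 then 1 else 0) *
      pd (p + Q) f) -
      c * coeff n ((MvPowerSeries.C (σ := ℕ) (R := ℂ)) ((Nat.doubleFactorial (2*p+2*Q+1) : ℂ) /
        (2 ^ (Q + 1) * (Nat.doubleFactorial (2*p - 1) : ℂ))) *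
      ((MvPowerSeries.X p : MvPowerSeries ℕ ℂ) - if p = 1 then 1 else 0) *
      pd (p + Q) g) := by
    intro p
    rw [pd_sub_smul, mul_sub, mul_smul_comm, map_sub, map_smul, smul_eq_mul]
  rw [finsum_congr hpt,
    finsum_sub_distrib (supp_vq Q f n)
      ((supp_vq Q g n).subset (by
        intro x hx
        rw [Function.mem_support] at hx ⊢
        exact fun h0 => hx (by rw [h0, mul_zero]))),
    ← mul_finsum _ c]

lemma Vir_sub_smul (k : ℤ) (c : ℂ) (f g : MvPowerSeries ℕ ℂ) :
    Vir k (f - c • g) = Vir k f - c • Vir k g := by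
  unfold Vir
  split_ifs with h1 h2 h3
  · have hF : ofFun (fun n => ∑ᶠ p : ℕ, coeff n (X (p + 1) * pd p (f - c • g))) =
        ofFun (fun n => ∑ᶠ p : ℕ, coeff n (X (p + 1) * pd p f)) -
        c • ofFun (fun n => ∑ᶠ p : ℕ, coeff n (X (p + 1) * pd p g)) := by
      apply MvPowerSeries.ext
      intro n
      rw [map_sub, map_smul, coeff_ofFun, coeff_ofFun, coeff_ofFun, smul_eq_mul]
      have hpt : ∀ p : ℕ, coeff n (X (p + 1) * pd p (f - c • g)) =
          coeff n (X (p + 1) * pd p f) - c * coeff n (X (p + 1) * pd p g) := by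
        intro p
        rw [pd_sub_smul, mul_sub, mul_smul_comm, map_sub, map_smul, smul_eq_mul]
      rw [finsum_congr hpt,
        finsum_sub_distrib (supp_string f n)
          ((supp_string g n).subset (by
            intro x hx
            rw [Function.mem_support] at hx ⊢
            exact fun h0 => hx (by rw [h0, mul_zero]))),
        ← mul_finsum _ c]
    have hB : (MvPowerSeries.C (σ := ℕ) (R := ℂ)) (1/2) * X 0 ^ 2 * (f - c • g) =
        (MvPowerSeries.C (σ := ℕ) (R := ℂ)) (1/2) * X 0 ^ 2 * f -
        c • ((MvPowerSeries.C (σ := ℕ) (R := ℂ)) (1/2) * X 0 ^ 2 * g) := by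
      rw [mul_sub, mul_smul_comm]
    rw [hF, hB, pd_sub_smul]
    module
  · rw [hS_lemma, hF_lemma, mul_sub, mul_sub, mul_smul_comm, mul_smul_comm]
    module
  · rw [hS_lemma, hF_lemma, mul_sub, mul_smul_comm]
    module
  · simp

end VirAux

/-- Uniqueness of the solution of the Virasoro constraints of two-dimensional
gravity: a formal power series `τ` with `τ(0) = 0` satisfying `L_m τ = 0` for all
`m ≥ -1` vanishes; consequently any two solutions of the Virasoro constraints are
proportional, i.e. the solution is unique up to a constant factor. -/
theorem virasoro_constraints_uniqueness :
    (∀ τ : MvPowerSeries ℕ ℂ, (MvPowerSeries.constantCoeff (σ := ℕ) (R := ℂ)) τ = 0 →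
      (∀ m : ℤ, -1 ≤ m → Vir m τ = 0) → τ = 0) ∧
    (∀ τ₁ τ₂ : MvPowerSeries ℕ ℂ,
      (∀ m : ℤ, -1 ≤ m → Vir m τ₁ = 0) → (∀ m : ℤ, -1 ≤ m → Vir m τ₂ = 0) →
      ∃ c : ℂ, τ₂ = c • τ₁ ∨ τ₁ = c • τ₂) := by
  constructor
  · exact fun τ h0 h => VirAux.vanish h0 h
  · intro τ₁ τ₂ h1 h2
    by_cases hc : (MvPowerSeries.constantCoeff (σ := ℕ) (R := ℂ)) τ₁ = 0
    · exact ⟨0, Or.inr (by rw [VirAux.vanish hc h1, zero_smul])⟩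
    · set c := (MvPowerSeries.constantCoeff (σ := ℕ) (R := ℂ)) τ₂ / (MvPowerSeries.constantCoeff (σ := ℕ) (R := ℂ)) τ₁ with hcdef
      have key : τ₂ - c • τ₁ = 0 := by
        apply VirAux.vanish
        · rw [map_sub]
          have hsm : (MvPowerSeries.constantCoeff (σ := ℕ) (R := ℂ)) (c • τ₁) =
              c * (MvPowerSeries.constantCoeff (σ := ℕ) (R := ℂ)) τ₁ := by
            rw [← MvPowerSeries.coeff_zero_eq_constantCoeff, map_smul, smul_eq_mul]
          rw [hsm, hcdef, div_mul_cancel₀ _ hc, sub_self]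
        · intro m hm
          rw [VirAux.Vir_sub_smul, h2 m hm, h1 m hm, smul_zero, sub_zero]
      exact ⟨c, Or.inl (sub_eq_zero.mp key)⟩
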